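/- Let D, Y be square-integrable real random variables and W a random variable with values in a measurable space 𝕎, all defined on a common probability space. Suppose there exist β ∈ ℝ and a measurable function g : 𝕎 → ℝ such that E[Y | σ(D, W)] = β·D + g(W) almost surely (a partially linear model). Then E[(D − E[D | σ(W)])·Y] = β·E[(D − E[D | σ(W)])²]. In particular, if E[(D − E[D | σ(W)])²] > 0, then the ratio E[(D − E[D | σ(W)])·Y] / E[(D − E[D | σ(W)])²] equals β. -/

import Mathlib

open MeasureTheory ProbabilityTheory

lemma aux_memℒp_two_condexp {Ω : Type*} {m m0 : MeasurableSpace Ω} (hm : m ≤ m0)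
    (P : Measure Ω) [IsFiniteMeasure P] {f : Ω → ℝ} (hf : MemLp f 2 P) :
    MemLp (P[f|m]) 2 P := by
  haveI : SigmaFinite (P.trim hm) := inferInstance
  set fL := hf.toLp f with hfL
  have heq : (condExpL2 ℝ ℝ hm fL : Ω → ℝ) =ᵐ[P] P[f|m] := by
    refine ae_eq_condExp_of_forall_setIntegral_eq hm (hf.integrable one_le_two)
      (fun s hs hμs => ?_) (fun s hs hμs => ?_) (aestronglyMeasurable_condExpL2 hm fL)
    · exact integrableOn_Lp_of_measure_ne_top _ fact_one_le_two_ennreal.elim hμs.ne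
    · rw [integral_condExpL2_eq hm fL hs hμs.ne]
      exact setIntegral_congr_ae (hm s hs) ((hf.coeFn_toLp).mono fun x hx _ => hx)
  exact (Lp.memLp ((condExpL2 ℝ ℝ hm fL : lpMeas ℝ ℝ m 2 P) : Lp ℝ 2 P)).ae_eq heq

lemma aux_integrable_mul {Ω : Type*} {m0 : MeasurableSpace Ω} {P : Measure Ω}
    {f g : Ω → ℝ} (hf : MemLp f 2 P) (hg : MemLp g 2 P) :
    Integrable (fun ω => f ω * g ω) P := by
  rw [← memLp_one_iff_integrable]
  have h := hg.smul hf (p := (2 : ENNReal)) (q := (2 : ENNReal)) (r := 1)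
  simpa [smul_eq_mul, Pi.mul_def] using h

/-- In a partially linear model `E[Y | σ(D, W)] = β·D + g(W)`, the expected conditional
covariance identity `E[(D − E[D|σ(W)])·Y] = β·E[(D − E[D|σ(W)])²]` holds; in particular,
if the denominator is positive, the ratio identifies `β`. -/
theorem partially_linear_identification
    {Ω 𝕎 : Type*} [mΩ : MeasurableSpace Ω] [MeasurableSpace 𝕎]
    (P : Measure Ω) [IsProbabilityMeasure P]
    (D Y : Ω → ℝ) (W : Ω → 𝕎)
    (hD : Measurable D) (hY : Measurable Y) (hW : Measurable W)
    (hD2 : MemLp D 2 P) (hY2 : MemLp Y 2 P)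
    (β : ℝ) (g : 𝕎 → ℝ) (hg : Measurable g)
    (hmodel : P[Y|MeasurableSpace.comap (fun ω => (D ω, W ω)) inferInstance]
      =ᵐ[P] fun ω => β * D ω + g (W ω)) :
    (∫ ω, (D ω - (P[D|MeasurableSpace.comap W inferInstance]) ω) * Y ω ∂P
      = β * ∫ ω, (D ω - (P[D|MeasurableSpace.comap W inferInstance]) ω) ^ 2 ∂P) ∧
    (0 < ∫ ω, (D ω - (P[D|MeasurableSpace.comap W inferInstance]) ω) ^ 2 ∂P →
      (∫ ω, (D ω - (P[D|MeasurableSpace.comap W inferInstance]) ω) * Y ω ∂P)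
        / (∫ ω, (D ω - (P[D|MeasurableSpace.comap W inferInstance]) ω) ^ 2 ∂P) = β) := by
  set mW : MeasurableSpace Ω := MeasurableSpace.comap W inferInstance with hmWdef
  set mDW : MeasurableSpace Ω :=
    MeasurableSpace.comap (fun ω => (D ω, W ω)) inferInstance with hmDWdef
  have hmW : mW ≤ mΩ := hW.comap_le
  have hmDW : mDW ≤ mΩ := (hD.prodMk hW).comap_le
  haveI : SigmaFinite (P.trim hmW) := inferInstance
  haveI : SigmaFinite (P.trim hmDW) := inferInstance
  have hWle : mW ≤ mDW := by
    rintro s ⟨t, ht, rfl⟩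
    exact ⟨Prod.snd ⁻¹' t, measurable_snd ht, rfl⟩
  set Dw : Ω → ℝ := P[D|mW] with hDwdef
  -- basic measurability and integrability
  have hDw2 : MemLp Dw 2 P := aux_memℒp_two_condexp hmW P hD2
  have hDt2 : MemLp (fun ω => D ω - Dw ω) 2 P := hD2.sub hDw2
  have hDtM : StronglyMeasurable[mDW] (fun ω => D ω - Dw ω) := by
    apply StronglyMeasurable.sub
    · exact (Measurable.stronglyMeasurable
        (measurable_fst.comp (measurable_iff_comap_le.mpr le_rfl)))
    · exact stronglyMeasurable_condExp.mono hWle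
  have hcond0 : P[fun ω => D ω - Dw ω|mW] =ᵐ[P] 0 := by
    have h1 : P[D - Dw|mW] =ᵐ[P] P[D|mW] - P[Dw|mW] :=
      condExp_sub (hD2.integrable one_le_two) integrable_condExp mW
    have h2 : P[Dw|mW] = Dw :=
      condExp_of_stronglyMeasurable hmW stronglyMeasurable_condExp integrable_condExp
    have : P[D - Dw|mW] =ᵐ[P] 0 := by
      refine h1.trans ?_
      rw [h2, ← hDwdef, sub_self]
    simpa [Pi.sub_def] using this
  -- the orthogonality lemma
  have hzero : ∀ h : Ω → ℝ, StronglyMeasurable[mW] h → MemLp h 2 P →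
      ∫ ω, (D ω - Dw ω) * h ω ∂P = 0 := by
    intro h hmeas h2
    have hint : Integrable (h * fun ω => D ω - Dw ω) P := by
      have := aux_integrable_mul h2 hDt2
      simpa [Pi.mul_def] using this
    have h1 : P[h * fun ω => D ω - Dw ω|mW]
        =ᵐ[P] h * P[fun ω => D ω - Dw ω|mW] :=
      condExp_mul_of_stronglyMeasurable_left hmeas hint (hDt2.integrable one_le_two)
    calc ∫ ω, (D ω - Dw ω) * h ω ∂P
        = ∫ ω, (h * fun ω => D ω - Dw ω) ω ∂P := by
          simp only [Pi.mul_apply]; congr 1; funext ω; ring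
      _ = ∫ ω, (P[h * fun ω => D ω - Dw ω|mW]) ω ∂P := (integral_condExp hmW).symm
      _ = 0 := by
          rw [integral_congr_ae (h1.trans ?_), integral_zero]
          filter_upwards [hcond0] with ω hω
          simp [hω]
  -- g ∘ W is in L²
  have hgW2 : MemLp (fun ω => g (W ω)) 2 P := by
    have hc2 : MemLp (P[Y|mDW]) 2 P := aux_memℒp_two_condexp hmDW P hY2
    have : (fun ω => g (W ω)) =ᵐ[P] fun ω => (P[Y|mDW]) ω - β * D ω := by
      filter_upwards [hmodel] with ω hω
      rw [hmDWdef] at hω; rw [hω]; ring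
    exact ((hc2.sub (hD2.const_mul β)).ae_eq this.symm)
  have hgWmeas : StronglyMeasurable[mW] (fun ω => g (W ω)) :=
    (hg.comp (measurable_iff_comap_le.mpr le_rfl)).stronglyMeasurable
  -- main computation
  have hDtD : ∫ ω, (D ω - Dw ω) * D ω ∂P = ∫ ω, (D ω - Dw ω) ^ 2 ∂P := by
    have hsq : Integrable (fun ω => (D ω - Dw ω) ^ 2) P := by
      have := aux_integrable_mul hDt2 hDt2
      simpa [sq] using this
    have hcross : Integrable (fun ω => (D ω - Dw ω) * Dw ω) P :=
      aux_integrable_mul hDt2 hDw2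
    have : ∫ ω, (D ω - Dw ω) * D ω ∂P
        = ∫ ω, ((D ω - Dw ω) ^ 2 + (D ω - Dw ω) * Dw ω) ∂P := by
      congr 1; funext ω; ring
    rw [this, integral_add hsq hcross, hzero Dw stronglyMeasurable_condExp hDw2, add_zero]
  have key : ∫ ω, (D ω - Dw ω) * Y ω ∂P = β * ∫ ω, (D ω - Dw ω) ^ 2 ∂P := by
    have hintDtY : Integrable (fun ω => (D ω - Dw ω) * Y ω) P :=
      aux_integrable_mul hDt2 hY2
    have hintDtY' : Integrable ((fun ω => D ω - Dw ω) * Y) P := by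
      simpa [Pi.mul_def] using hintDtY
    have h1 : P[(fun ω => D ω - Dw ω) * Y|mDW]
        =ᵐ[P] (fun ω => D ω - Dw ω) * P[Y|mDW] :=
      condExp_mul_of_stronglyMeasurable_left hDtM hintDtY' (hY2.integrable one_le_two)
    have hintDtD : Integrable (fun ω => (D ω - Dw ω) * D ω) P :=
      aux_integrable_mul hDt2 hD2
    have hintDtg : Integrable (fun ω => (D ω - Dw ω) * g (W ω)) P :=
      aux_integrable_mul hDt2 hgW2
    calc ∫ ω, (D ω - Dw ω) * Y ω ∂P
        = ∫ ω, ((fun ω => D ω - Dw ω) * Y) ω ∂P := by simp [Pi.mul_def]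
      _ = ∫ ω, (P[(fun ω => D ω - Dw ω) * Y|mDW]) ω ∂P := (integral_condExp hmDW).symm
      _ = ∫ ω, (D ω - Dw ω) * (β * D ω + g (W ω)) ∂P := by
          refine integral_congr_ae (h1.trans ?_)
          filter_upwards [hmodel] with ω hω
          simp only [Pi.mul_apply]
          rw [hω]
      _ = ∫ ω, (β * ((D ω - Dw ω) * D ω) + (D ω - Dw ω) * g (W ω)) ∂P := by
          congr 1; funext ω; ring
      _ = β * ∫ ω, (D ω - Dw ω) * D ω ∂P + ∫ ω, (D ω - Dw ω) * g (W ω) ∂P := by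
          rw [integral_add (hintDtD.const_mul β) hintDtg, integral_const_mul]
      _ = β * ∫ ω, (D ω - Dw ω) ^ 2 ∂P := by
          rw [hDtD, hzero _ hgWmeas hgW2, add_zero]
  refine ⟨key, fun hpos => ?_⟩
  rw [key, mul_div_assoc, div_self hpos.ne', mul_one]
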